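/- Let R be an n²×n² matrix over a field k satisfying the quantum Yang–Baxter equation, invertible, and with invertible second-transpose-inverse R̃ := ((R^{t₂})⁻¹)^{t₂}. Let B be an associative unital k-algebra containing an n×n matrix t = (t^i_j) satisfying the FRT relations for R, and an n×n matrix d = (d^i_j) satisfying d₁d₂R = Rd₂d₁ (i.e. Σ_{a,b} d^i_a d^j_b R^a_m{}^b_n = Σ_{a,b} R^i_a{}^j_b d^b_n d^a_m for all indices), together with the braided Heisenberg–Weyl cross relations: d^{i₁}_{i₀} t^{j₀}_{j₁} − Σ_{a,b,c,e} R^a_{i₀}{}^{j₀}_b · t^b_c · R^c_{j₁}{}^{i₁}_e · d^e_a = δ^{i₁}_{j₁} δ^{j₀}_{i₀} for all indices. Define D^{i₁}_{i₀} := Σ_a t^a_{i₀} d^{i₁}_a. Then for all multi-indices I = (i₀,i₁), J = (j₀,j₁): D^I D^J − Σ_{A,B} Ψ'^I_A{}^J_B D^B D^A = D^{j₁}_{i₀} δ^{i₁}_{j₀} − Σ_{A,B} Ψ'^I_A{}^J_B D^{a₁}_{b₀} δ^{b₁}_{a₀}, where Ψ'^I_K{}^J_L := Σ_{a,b,c,e}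 (R⁻¹)^{l₀}_e{}^c_{i₀} · R^e_{j₀}{}^{i₁}_a · R^a_{k₁}{}^{j₁}_b · R̃^{k₀}_c{}^b_{l₁}. (This is Proposition 3.4: the left-invariant vector fields on A(R) close under a braided-Lie-algebra-type bracket with relation matrix Ψ' of the braided matrices B(R₂₁).) -/

import Mathlib

open Matrix

/-- `A` acting in the 1st and 2nd tensor factors of the threefold tensor power. -/
def lift12 {k : Type*} [Field k] {ι : Type*} [DecidableEq ι]
    (A : Matrix (ι × ι) (ι × ι) k) : Matrix (ι × ι × ι) (ι × ι × ι) k :=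
  fun p q => A (p.1, p.2.1) (q.1, q.2.1) * (if p.2.2 = q.2.2 then 1 else 0)

/-- `A` acting in the 1st and 3rd tensor factors of the threefold tensor power. -/
def lift13 {k : Type*} [Field k] {ι : Type*} [DecidableEq ι]
    (A : Matrix (ι × ι) (ι × ι) k) : Matrix (ι × ι × ι) (ι × ι × ι) k :=
  fun p q => A (p.1, p.2.2) (q.1, q.2.2) * (if p.2.1 = q.2.1 then 1 else 0)

/-- `A` acting in the 2nd and 3rd tensor factors of the threefold tensor power. -/
def lift23 {k : Type*} [Field k] {ι : Type*} [DecidableEq ι]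
    (A : Matrix (ι × ι) (ι × ι) k) : Matrix (ι × ι × ι) (ι × ι × ι) k :=
  fun p q => A (p.2.1, p.2.2) (q.2.1, q.2.2) * (if p.1 = q.1 then 1 else 0)

/-- The quantum Yang–Baxter equation `R₁₂R₁₃R₂₃ = R₂₃R₁₃R₁₂`. -/
def QYBE {k : Type*} [Field k] {ι : Type*} [DecidableEq ι] [Fintype ι]
    (R : Matrix (ι × ι) (ι × ι) k) : Prop :=
  lift12 R * lift13 R * lift23 R = lift23 R * lift13 R * lift12 R

/-- Transposition in the second tensor factor: `(M^{t₂})^i_j{}^k_l = M^i_j{}^l_k`,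
with the convention `M^i_j{}^k_l = M (i,k) (j,l)`. -/
def t2 {k : Type*} [Field k] {ι : Type*}
    (M : Matrix (ι × ι) (ι × ι) k) : Matrix (ι × ι) (ι × ι) k :=
  fun p q => M (p.1, q.2) (q.1, p.2)

/-- An `ι × ι` matrix `t` of elements of an algebra `B` satisfies the FRT relations
`R t₁ t₂ = t₂ t₁ R` for `R`, where we write `R^i_j{}^k_l = R (i,k) (j,l)`. -/
def FRT {k : Type*} [Field k] {B : Type*} [Ring B] [Algebra k B]
    {ι : Type*} [Fintype ι]
    (R : Matrix (ι × ι) (ι × ι) k) (t : ι → ι → B) : Prop :=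
  ∀ i j m l : ι,
    (∑ a, ∑ b, R (i, j) (a, b) • (t a m * t b l)) =
    (∑ a, ∑ b, R (a, b) (m, l) • (t j b * t i a))

/-- The braided-matrix relation coefficients
`Ψ'^I_K{}^J_L = Σ (R⁻¹)^{l₀}_e{}^c_{i₀} · R^e_{j₀}{}^{i₁}_a · R^a_{k₁}{}^{j₁}_b · R̃^{k₀}_c{}^b_{l₁}`,
with `I = (i₀,i₁)` etc and `R^i_j{}^k_l = R (i,k) (j,l)`. -/
def Psi' {k : Type*} [Field k] {n : ℕ}
    (R Rinv Rtilde : Matrix (Fin n × Fin n) (Fin n × Fin n) k)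
    (I K J L : Fin n × Fin n) : k :=
  ∑ a, ∑ b, ∑ c, ∑ e,
    Rinv (L.1, c) (e, I.1) * R (e, I.2) (J.1, a) *
      R (a, J.2) (K.2, b) * Rtilde (K.1, b) (c, L.2)


section BraidedHelpers
variable {k : Type*} [Field k] {n : ℕ} {B : Type*} [Ring B] [Algebra k B]

private lemma brd_s3 {M : Type*} [AddCommMonoid M] (f : Fin n → Fin n → Fin n → M) :
    ∑ a, ∑ b, ∑ c, f a b c = ∑ b, ∑ c, ∑ a, f a b c := by
  rw [Finset.sum_comm]; exact Finset.sum_congr rfl fun _ _ => Finset.sum_comm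

private lemma brd_s4 {M : Type*} [AddCommMonoid M] (f : Fin n → Fin n → Fin n → Fin n → M) :
    ∑ a, ∑ b, ∑ c, ∑ e, f a b c e = ∑ b, ∑ c, ∑ e, ∑ a, f a b c e := by
  rw [Finset.sum_comm]; exact Finset.sum_congr rfl fun _ _ => brd_s3 _

private lemma brd_s5 {M : Type*} [AddCommMonoid M]
    (f : Fin n → Fin n → Fin n → Fin n → Fin n → M) :
    ∑ a, ∑ b, ∑ c, ∑ e, ∑ g, f a b c e g = ∑ b, ∑ c, ∑ e, ∑ g, ∑ a, f a b c e g := by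
  rw [Finset.sum_comm]; exact Finset.sum_congr rfl fun _ _ => brd_s4 _

private lemma brd_s6 {M : Type*} [AddCommMonoid M]
    (f : Fin n → Fin n → Fin n → Fin n → Fin n → Fin n → M) :
    ∑ a, ∑ b, ∑ c, ∑ e, ∑ g, ∑ h, f a b c e g h
      = ∑ b, ∑ c, ∑ e, ∑ g, ∑ h, ∑ a, f a b c e g h := by
  rw [Finset.sum_comm]; exact Finset.sum_congr rfl fun _ _ => brd_s5 _

private lemma brd_s7 {M : Type*} [AddCommMonoid M]
    (f : Fin n → Fin n → Fin n → Fin n → Fin n → Fin n → Fin n → M) :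
    ∑ a, ∑ b, ∑ c, ∑ e, ∑ g, ∑ h, ∑ i, f a b c e g h i
      = ∑ b, ∑ c, ∑ e, ∑ g, ∑ h, ∑ i, ∑ a, f a b c e g h i := by
  rw [Finset.sum_comm]; exact Finset.sum_congr rfl fun _ _ => brd_s6 _

private lemma brd_s8 {M : Type*} [AddCommMonoid M]
    (f : Fin n → Fin n → Fin n → Fin n → Fin n → Fin n → Fin n → Fin n → M) :
    ∑ a, ∑ b, ∑ c, ∑ e, ∑ g, ∑ h, ∑ i, ∑ j, f a b c e g h i j
      = ∑ b, ∑ c, ∑ e, ∑ g, ∑ h, ∑ i, ∑ j, ∑ a, f a b c e g h i j := by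
  rw [Finset.sum_comm]; exact Finset.sum_congr rfl fun _ _ => brd_s7 _

variable (R Rinv Rtilde : Matrix (Fin n × Fin n) (Fin n × Fin n) k)

private lemma brd_sumB (hinv : R * Rinv = 1) (a' c' a c : Fin n) :
    (∑ p, ∑ e, R (a', c') (p, e) * Rinv (p, e) (a, c)) = if a' = a ∧ c' = c then 1 else 0 := by
  have h := congrFun (congrFun hinv (a', c')) (a, c)
  rw [Matrix.mul_apply, Fintype.sum_prod_type] at h
  rw [h, Matrix.one_apply]
  simp [Prod.ext_iff]

private lemma brd_sumA (htilde : t2 R * t2 Rtilde = 1) (e' f' e f : Fin n) :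
    (∑ r, ∑ q, R (e', q) (r, f') * Rtilde (r, f) (e, q)) = if e' = e ∧ f' = f then 1 else 0 := by
  have h := congrFun (congrFun htilde (e', f')) (e, f)
  rw [Matrix.mul_apply, Fintype.sum_prod_type] at h
  simp only [t2] at h
  rw [h, Matrix.one_apply]
  simp [Prod.ext_iff]

private lemma brd_scalarTinv (hinv : R * Rinv = 1) (htilde : t2 R * t2 Rtilde = 1)
    (a c f a' c' f' : Fin n) :
    (∑ e', ∑ p, ∑ q, ∑ r, ∑ e,
      Rinv (p, e) (a, c) * Rtilde (r, f) (e, q) * (R (a', c') (p, e') * R (e', q) (r, f')))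
    = if (a' = a ∧ c' = c) ∧ f' = f then 1 else 0 := by
  have step1 : ∀ e' p e : Fin n,
      (∑ q, ∑ r, Rinv (p, e) (a, c) * Rtilde (r, f) (e, q) *
        (R (a', c') (p, e') * R (e', q) (r, f')))
      = Rinv (p, e) (a, c) * R (a', c') (p, e') * (if e' = e ∧ f' = f then 1 else 0) := by
    intro e' p e
    rw [← brd_sumA R Rtilde htilde e' f' e f, Finset.sum_comm, Finset.mul_sum]
    refine Finset.sum_congr rfl fun r _ => ?_
    rw [Finset.mul_sum]
    exact Finset.sum_congr rfl fun q _ => by ring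
  calc (∑ e', ∑ p, ∑ q, ∑ r, ∑ e,
        Rinv (p, e) (a, c) * Rtilde (r, f) (e, q) * (R (a', c') (p, e') * R (e', q) (r, f')))
      = ∑ e', ∑ p, ∑ e,
          Rinv (p, e) (a, c) * R (a', c') (p, e') * (if e' = e ∧ f' = f then 1 else 0) := by
        refine Finset.sum_congr rfl fun e' _ => Finset.sum_congr rfl fun p _ => ?_
        refine Eq.trans (brd_s3 _) (Eq.trans (brd_s3 _) ?_)
        exact Finset.sum_congr rfl fun e _ => step1 e' p e
    _ = ∑ e', ∑ p, (R (a', c') (p, e') * Rinv (p, e') (a, c)) * (if f' = f then 1 else 0) := by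
        refine Finset.sum_congr rfl fun e' _ => Finset.sum_congr rfl fun p _ => ?_
        by_cases hf : f' = f
        · simp only [hf, and_true, mul_ite, mul_one, mul_zero, if_true]
          rw [Finset.sum_ite_eq Finset.univ e' fun e => Rinv (p, e) (a, c) * R (a', c') (p, e')]
          simp [mul_comm]
        · simp [hf]
    _ = (∑ e', ∑ p, R (a', c') (p, e') * Rinv (p, e') (a, c)) * (if f' = f then 1 else 0) := by
        rw [Finset.sum_mul]
        exact Finset.sum_congr rfl fun e' _ => (Finset.sum_mul _ _ _).symm
    _ = (if a' = a ∧ c' = c then 1 else 0) * (if f' = f then 1 else 0) := by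
        congr 1
        rw [Finset.sum_comm]
        exact brd_sumB R Rinv hinv a' c' a c
    _ = if (a' = a ∧ c' = c) ∧ f' = f then 1 else 0 := by
        by_cases h1 : a' = a ∧ c' = c <;> by_cases h2 : f' = f <;> simp [h1, h2]

private lemma brd_Dexch (t d D : Fin n → Fin n → B)
    (hd : ∀ i j m p : Fin n,
      (∑ a, ∑ b, R (a, b) (m, p) • (d i a * d j b)) =
      (∑ a, ∑ b, R (i, j) (a, b) • (d b p * d a m)))
    (hweyl : ∀ i₀ i₁ j₀ j₁ : Fin n,
      d i₁ i₀ * t j₀ j₁ -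
        (∑ a, ∑ b, ∑ c, ∑ e,
          (R (a, j₀) (i₀, b) * R (c, i₁) (j₁, e)) • (t b c * d e a)) =
      if i₁ = j₁ ∧ j₀ = i₀ then 1 else 0)
    (hD : ∀ u l, D u l = ∑ a, t a l * d u a)
    (i₁ i₀ j₁ j₀ : Fin n) :
    d i₁ i₀ * D j₁ j₀ =
      (∑ c, ∑ e, ∑ α, ∑ β, (R (c, i₁) (j₀, e) * R (e, j₁) (α, β)) • (D β c * d α i₀)) +
      (if i₁ = j₀ then d j₁ i₀ else 0) := by
  have hw : ∀ a : Fin n, d i₁ i₀ * t a j₀ =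
      (if i₁ = j₀ ∧ a = i₀ then 1 else 0) +
      (∑ p, ∑ b, ∑ c, ∑ e, (R (p, a) (i₀, b) * R (c, i₁) (j₀, e)) • (t b c * d e p)) := by
    intro a
    have h := hweyl i₀ i₁ a j₀
    rw [sub_eq_iff_eq_add] at h
    rw [h, add_comm]
  have hδ : (∑ a, (if i₁ = j₀ ∧ a = i₀ then 1 else 0) * d j₁ a)
      = (if i₁ = j₀ then d j₁ i₀ else 0) := by
    by_cases h : i₁ = j₀ <;> simp [h]
  have hQ : (∑ a, (∑ p, ∑ b, ∑ c, ∑ e,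
        (R (p, a) (i₀, b) * R (c, i₁) (j₀, e)) • (t b c * d e p)) * d j₁ a)
      = ∑ c, ∑ e, ∑ α, ∑ β, (R (c, i₁) (j₀, e) * R (e, j₁) (α, β)) • (D β c * d α i₀) := by
    calc (∑ a, (∑ p, ∑ b, ∑ c, ∑ e,
            (R (p, a) (i₀, b) * R (c, i₁) (j₀, e)) • (t b c * d e p)) * d j₁ a)
        = ∑ a, ∑ p, ∑ b, ∑ c, ∑ e,
            (R (p, a) (i₀, b) * R (c, i₁) (j₀, e)) • (t b c * (d e p * d j₁ a)) := by
          exact Finset.sum_congr rfl fun a _ => by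
            simp only [Finset.sum_mul, smul_mul_assoc, mul_assoc]
      _ = ∑ p, ∑ b, ∑ c, ∑ e, ∑ a,
            (R (p, a) (i₀, b) * R (c, i₁) (j₀, e)) • (t b c * (d e p * d j₁ a)) := brd_s5 _
      _ = ∑ b, ∑ c, ∑ e, ∑ a, ∑ p,
            (R (p, a) (i₀, b) * R (c, i₁) (j₀, e)) • (t b c * (d e p * d j₁ a)) := brd_s5 _
      _ = ∑ b, ∑ c, ∑ e, ∑ p, ∑ a,
            (R (p, a) (i₀, b) * R (c, i₁) (j₀, e)) • (t b c * (d e p * d j₁ a)) := by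
          exact Finset.sum_congr rfl fun b _ => Finset.sum_congr rfl fun c _ =>
            Finset.sum_congr rfl fun e _ => Finset.sum_comm
      _ = ∑ b, ∑ c, ∑ e, R (c, i₁) (j₀, e) •
            (t b c * (∑ p, ∑ a, R (p, a) (i₀, b) • (d e p * d j₁ a))) := by
          refine Finset.sum_congr rfl fun b _ => Finset.sum_congr rfl fun c _ =>
            Finset.sum_congr rfl fun e _ => ?_
          simp only [Finset.mul_sum, Finset.smul_sum, mul_smul_comm, smul_smul]
          exact Finset.sum_congr rfl fun p _ => Finset.sum_congr rfl fun a _ => by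
            rw [mul_comm (R (p, a) (i₀, b)) (R (c, i₁) (j₀, e))]
      _ = ∑ b, ∑ c, ∑ e, R (c, i₁) (j₀, e) •
            (t b c * (∑ α, ∑ β, R (e, j₁) (α, β) • (d β b * d α i₀))) := by
          exact Finset.sum_congr rfl fun b _ => Finset.sum_congr rfl fun c _ =>
            Finset.sum_congr rfl fun e _ => by rw [hd e j₁ i₀ b]
      _ = ∑ b, ∑ c, ∑ e, ∑ α, ∑ β, (R (c, i₁) (j₀, e) * R (e, j₁) (α, β)) •
            (t b c * (d β b * d α i₀)) := by
          refine Finset.sum_congr rfl fun b _ => Finset.sum_congr rfl fun c _ =>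
            Finset.sum_congr rfl fun e _ => ?_
          simp only [Finset.mul_sum, Finset.smul_sum, mul_smul_comm, smul_smul]
      _ = ∑ c, ∑ e, ∑ α, ∑ β, ∑ b, (R (c, i₁) (j₀, e) * R (e, j₁) (α, β)) •
            (t b c * (d β b * d α i₀)) := brd_s5 _
      _ = ∑ c, ∑ e, ∑ α, ∑ β, (R (c, i₁) (j₀, e) * R (e, j₁) (α, β)) •
            ((∑ b, t b c * d β b) * d α i₀) := by
          refine Finset.sum_congr rfl fun c _ => Finset.sum_congr rfl fun e _ =>
            Finset.sum_congr rfl fun α _ => Finset.sum_congr rfl fun β _ => ?_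
          rw [Finset.sum_mul, Finset.smul_sum]
          exact Finset.sum_congr rfl fun b _ => by rw [mul_assoc]
      _ = ∑ c, ∑ e, ∑ α, ∑ β, (R (c, i₁) (j₀, e) * R (e, j₁) (α, β)) • (D β c * d α i₀) := by
          refine Finset.sum_congr rfl fun c _ => Finset.sum_congr rfl fun e _ =>
            Finset.sum_congr rfl fun α _ => Finset.sum_congr rfl fun β _ => ?_
          rw [hD β c]
  calc d i₁ i₀ * D j₁ j₀
      = ∑ a, (d i₁ i₀ * t a j₀) * d j₁ a := by
        rw [hD, Finset.mul_sum]
        exact Finset.sum_congr rfl fun a _ => (mul_assoc _ _ _).symm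
    _ = (∑ a, (if i₁ = j₀ ∧ a = i₀ then 1 else 0) * d j₁ a)
        + ∑ a, (∑ p, ∑ b, ∑ c, ∑ e,
            (R (p, a) (i₀, b) * R (c, i₁) (j₀, e)) • (t b c * d e p)) * d j₁ a := by
        rw [← Finset.sum_add_distrib]
        exact Finset.sum_congr rfl fun a _ => by rw [hw a, add_mul]
    _ = (∑ c, ∑ e, ∑ α, ∑ β, (R (c, i₁) (j₀, e) * R (e, j₁) (α, β)) • (D β c * d α i₀)) +
        (if i₁ = j₀ then d j₁ i₀ else 0) := by rw [hδ, hQ, add_comm]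

private lemma brd_DDexp (t d D : Fin n → Fin n → B)
    (hD : ∀ u l, D u l = ∑ a, t a l * d u a)
    (hdx : ∀ i₁ i₀ j₁ j₀ : Fin n, d i₁ i₀ * D j₁ j₀ =
      (∑ c, ∑ e, ∑ α, ∑ β, (R (c, i₁) (j₀, e) * R (e, j₁) (α, β)) • (D β c * d α i₀)) +
      (if i₁ = j₀ then d j₁ i₀ else 0))
    (i₁ i₀ j₁ j₀ : Fin n) :
    D i₁ i₀ * D j₁ j₀ =
      (∑ c, ∑ e, ∑ α, ∑ β, (R (c, i₁) (j₀, e) * R (e, j₁) (α, β)) •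
        (∑ w, t w i₀ * (D β c * d α w))) +
      (if i₁ = j₀ then D j₁ i₀ else 0) := by
  calc D i₁ i₀ * D j₁ j₀
      = ∑ w, t w i₀ * (d i₁ w * D j₁ j₀) := by
        rw [hD i₁ i₀, Finset.sum_mul]
        exact Finset.sum_congr rfl fun w _ => mul_assoc _ _ _
    _ = (∑ w, t w i₀ * ∑ c, ∑ e, ∑ α, ∑ β,
          (R (c, i₁) (j₀, e) * R (e, j₁) (α, β)) • (D β c * d α w))
        + ∑ w, t w i₀ * (if i₁ = j₀ then d j₁ w else 0) := by
        rw [← Finset.sum_add_distrib]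
        refine Finset.sum_congr rfl fun w _ => ?_
        rw [hdx i₁ w j₁ j₀, mul_add]
    _ = (∑ c, ∑ e, ∑ α, ∑ β, (R (c, i₁) (j₀, e) * R (e, j₁) (α, β)) •
          (∑ w, t w i₀ * (D β c * d α w))) +
        (if i₁ = j₀ then D j₁ i₀ else 0) := by
        congr 1
        · calc (∑ w, t w i₀ * ∑ c, ∑ e, ∑ α, ∑ β,
                (R (c, i₁) (j₀, e) * R (e, j₁) (α, β)) • (D β c * d α w))
              = ∑ w, ∑ c, ∑ e, ∑ α, ∑ β,
                (R (c, i₁) (j₀, e) * R (e, j₁) (α, β)) • (t w i₀ * (D β c * d α w)) := by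
                exact Finset.sum_congr rfl fun w _ => by
                  simp only [Finset.mul_sum, mul_smul_comm]
            _ = ∑ c, ∑ e, ∑ α, ∑ β, ∑ w,
                (R (c, i₁) (j₀, e) * R (e, j₁) (α, β)) • (t w i₀ * (D β c * d α w)) := brd_s5 _
            _ = ∑ c, ∑ e, ∑ α, ∑ β, (R (c, i₁) (j₀, e) * R (e, j₁) (α, β)) •
                (∑ w, t w i₀ * (D β c * d α w)) := by
                refine Finset.sum_congr rfl fun c _ => Finset.sum_congr rfl fun e _ =>
                  Finset.sum_congr rfl fun α _ => Finset.sum_congr rfl fun β _ => ?_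
                rw [Finset.smul_sum]
        · by_cases h : i₁ = j₀ <;> simp [h, hD j₁ i₀]

private lemma brd_Texch (t d D : Fin n → Fin n → B)
    (ht : ∀ i j m l : Fin n,
      (∑ a, ∑ b, R (i, j) (a, b) • (t a m * t b l)) =
      (∑ a, ∑ b, R (a, b) (m, l) • (t j b * t i a)))
    (hweyl : ∀ i₀ i₁ j₀ j₁ : Fin n,
      d i₁ i₀ * t j₀ j₁ -
        (∑ a, ∑ b, ∑ c, ∑ e,
          (R (a, j₀) (i₀, b) * R (c, i₁) (j₁, e)) • (t b c * d e a)) =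
      if i₁ = j₁ ∧ j₀ = i₀ then 1 else 0)
    (hD : ∀ u l, D u l = ∑ a, t a l * d u a)
    (i₁ i₀ j₀ j₁ : Fin n) :
    D i₁ i₀ * t j₀ j₁ =
      (∑ a, ∑ c, ∑ e, ∑ f, (R (a, c) (i₀, e) * R (e, i₁) (j₁, f)) • (t j₀ c * D f a)) +
      (if i₁ = j₁ then t j₀ i₀ else 0) := by
  have hw : ∀ u : Fin n, d i₁ u * t j₀ j₁ =
      (if i₁ = j₁ ∧ j₀ = u then 1 else 0) +
      (∑ a, ∑ b, ∑ c, ∑ e, (R (a, j₀) (u, b) * R (c, i₁) (j₁, e)) • (t b c * d e a)) := by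
    intro u
    have h := hweyl u i₁ j₀ j₁
    rw [sub_eq_iff_eq_add] at h
    rw [h, add_comm]
  have hδ : (∑ u, t u i₀ * (if i₁ = j₁ ∧ j₀ = u then 1 else 0))
      = (if i₁ = j₁ then t j₀ i₀ else 0) := by
    by_cases h : i₁ = j₁ <;> simp [h]
  have hQ : (∑ u, t u i₀ * (∑ a, ∑ b, ∑ c, ∑ e,
        (R (a, j₀) (u, b) * R (c, i₁) (j₁, e)) • (t b c * d e a)))
      = ∑ a, ∑ c, ∑ e, ∑ f, (R (a, c) (i₀, e) * R (e, i₁) (j₁, f)) • (t j₀ c * D f a) := by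
    calc (∑ u, t u i₀ * (∑ a, ∑ b, ∑ c, ∑ e,
            (R (a, j₀) (u, b) * R (c, i₁) (j₁, e)) • (t b c * d e a)))
        = ∑ u, ∑ a, ∑ b, ∑ c, ∑ e,
            (R (a, j₀) (u, b) * R (c, i₁) (j₁, e)) • ((t u i₀ * t b c) * d e a) := by
          exact Finset.sum_congr rfl fun u _ => by
            simp only [Finset.mul_sum, mul_smul_comm, mul_assoc]
      _ = ∑ a, ∑ b, ∑ c, ∑ e, ∑ u,
            (R (a, j₀) (u, b) * R (c, i₁) (j₁, e)) • ((t u i₀ * t b c) * d e a) := brd_s5 _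
      _ = ∑ a, ∑ c, ∑ e, ∑ u, ∑ b,
            (R (a, j₀) (u, b) * R (c, i₁) (j₁, e)) • ((t u i₀ * t b c) * d e a) := by
          exact Finset.sum_congr rfl fun a _ => brd_s4 _
      _ = ∑ a, ∑ c, ∑ e, R (c, i₁) (j₁, e) •
            ((∑ u, ∑ b, R (a, j₀) (u, b) • (t u i₀ * t b c)) * d e a) := by
          refine Finset.sum_congr rfl fun a _ => Finset.sum_congr rfl fun c _ =>
            Finset.sum_congr rfl fun e _ => ?_
          rw [Finset.sum_mul, Finset.smul_sum]
          refine Finset.sum_congr rfl fun u _ => ?_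
          rw [Finset.sum_mul, Finset.smul_sum]
          refine Finset.sum_congr rfl fun b _ => ?_
          rw [smul_mul_assoc, smul_smul, mul_comm (R (a, j₀) (u, b)) (R (c, i₁) (j₁, e))]
      _ = ∑ a, ∑ c, ∑ e, R (c, i₁) (j₁, e) •
            ((∑ p, ∑ q, R (p, q) (i₀, c) • (t j₀ q * t a p)) * d e a) := by
          refine Finset.sum_congr rfl fun a _ => Finset.sum_congr rfl fun c _ =>
            Finset.sum_congr rfl fun e _ => ?_
          rw [ht a j₀ i₀ c]
      _ = ∑ a, ∑ c, ∑ e, ∑ p, ∑ q, (R (c, i₁) (j₁, e) * R (p, q) (i₀, c)) •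
            (t j₀ q * (t a p * d e a)) := by
          refine Finset.sum_congr rfl fun a _ => Finset.sum_congr rfl fun c _ =>
            Finset.sum_congr rfl fun e _ => ?_
          rw [Finset.sum_mul, Finset.smul_sum]
          refine Finset.sum_congr rfl fun p _ => ?_
          rw [Finset.sum_mul, Finset.smul_sum]
          refine Finset.sum_congr rfl fun q _ => ?_
          rw [smul_mul_assoc, smul_smul, mul_assoc]
      _ = ∑ c, ∑ e, ∑ p, ∑ q, ∑ a, (R (c, i₁) (j₁, e) * R (p, q) (i₀, c)) •
            (t j₀ q * (t a p * d e a)) := brd_s5 _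
      _ = ∑ c, ∑ e, ∑ p, ∑ q, (R (c, i₁) (j₁, e) * R (p, q) (i₀, c)) •
            (t j₀ q * D e p) := by
          refine Finset.sum_congr rfl fun c _ => Finset.sum_congr rfl fun e _ =>
            Finset.sum_congr rfl fun p _ => Finset.sum_congr rfl fun q _ => ?_
          rw [hD e p, Finset.mul_sum, Finset.smul_sum]
      _ = ∑ p, ∑ q, ∑ c, ∑ e, (R (c, i₁) (j₁, e) * R (p, q) (i₀, c)) •
            (t j₀ q * D e p) := by
          rw [brd_s4 fun c e p q => (R (c, i₁) (j₁, e) * R (p, q) (i₀, c)) • (t j₀ q * D e p)]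
          exact brd_s4 _
      _ = ∑ a, ∑ c, ∑ e, ∑ f, (R (a, c) (i₀, e) * R (e, i₁) (j₁, f)) • (t j₀ c * D f a) := by
          refine Finset.sum_congr rfl fun a _ => Finset.sum_congr rfl fun c _ =>
            Finset.sum_congr rfl fun e _ => Finset.sum_congr rfl fun f _ => ?_
          rw [mul_comm]
  calc D i₁ i₀ * t j₀ j₁
      = ∑ u, t u i₀ * (d i₁ u * t j₀ j₁) := by
        rw [hD i₁ i₀, Finset.sum_mul]
        exact Finset.sum_congr rfl fun u _ => mul_assoc _ _ _
    _ = (∑ u, t u i₀ * (if i₁ = j₁ ∧ j₀ = u then 1 else 0))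
        + ∑ u, t u i₀ * (∑ a, ∑ b, ∑ c, ∑ e,
            (R (a, j₀) (u, b) * R (c, i₁) (j₁, e)) • (t b c * d e a)) := by
        rw [← Finset.sum_add_distrib]
        exact Finset.sum_congr rfl fun u _ => by rw [hw u, mul_add]
    _ = (∑ a, ∑ c, ∑ e, ∑ f, (R (a, c) (i₀, e) * R (e, i₁) (j₁, f)) • (t j₀ c * D f a)) +
        (if i₁ = j₁ then t j₀ i₀ else 0) := by rw [hδ, hQ, add_comm]

private lemma brd_Tinv (t d D : Fin n → Fin n → B)
    (hinv : R * Rinv = 1) (htilde : t2 R * t2 Rtilde = 1)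
    (htx : ∀ i₁ i₀ j₀ j₁ : Fin n, D i₁ i₀ * t j₀ j₁ =
      (∑ a, ∑ c, ∑ e, ∑ f, (R (a, c) (i₀, e) * R (e, i₁) (j₁, f)) • (t j₀ c * D f a)) +
      (if i₁ = j₁ then t j₀ i₀ else 0))
    (m c f a : Fin n) :
    t m c * D f a =
      (∑ p, ∑ q, ∑ r, ∑ e, (Rinv (p, e) (a, c) * Rtilde (r, f) (e, q)) • (D q p * t m r))
      - (∑ p, ∑ e, (Rinv (p, e) (a, c) * (∑ s, Rtilde (s, f) (e, s))) • t m p) := by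
  rw [eq_sub_iff_add_eq]
  have hTsub : (∑ p, ∑ q, ∑ r, ∑ e, (Rinv (p, e) (a, c) * Rtilde (r, f) (e, q)) •
        (if q = r then t m p else 0))
      = ∑ p, ∑ e, (Rinv (p, e) (a, c) * (∑ s, Rtilde (s, f) (e, s))) • t m p := by
    refine Finset.sum_congr rfl fun p _ => ?_
    calc (∑ q, ∑ r, ∑ e, (Rinv (p, e) (a, c) * Rtilde (r, f) (e, q)) •
            (if q = r then t m p else 0))
        = ∑ q, ∑ e, (Rinv (p, e) (a, c) * Rtilde (q, f) (e, q)) • t m p := by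
          refine Finset.sum_congr rfl fun q _ => ?_
          rw [Finset.sum_comm]
          refine Finset.sum_congr rfl fun e _ => ?_
          simp only [smul_ite, smul_zero]
          rw [Finset.sum_ite_eq Finset.univ q
            (fun r => (Rinv (p, e) (a, c) * Rtilde (r, f) (e, q)) • t m p)]
          simp
      _ = ∑ e, (Rinv (p, e) (a, c) * (∑ s, Rtilde (s, f) (e, s))) • t m p := by
          rw [Finset.sum_comm]
          refine Finset.sum_congr rfl fun e _ => ?_
          rw [Finset.mul_sum, Finset.sum_smul]
  have hT1 : (∑ p, ∑ q, ∑ r, ∑ e, (Rinv (p, e) (a, c) * Rtilde (r, f) (e, q)) •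
        (∑ a', ∑ c', ∑ e', ∑ f', (R (a', c') (p, e') * R (e', q) (r, f')) •
          (t m c' * D f' a')))
      = t m c * D f a := by
    calc (∑ p, ∑ q, ∑ r, ∑ e, (Rinv (p, e) (a, c) * Rtilde (r, f) (e, q)) •
          (∑ a', ∑ c', ∑ e', ∑ f', (R (a', c') (p, e') * R (e', q) (r, f')) •
            (t m c' * D f' a')))
        = ∑ p, ∑ q, ∑ r, ∑ e, ∑ a', ∑ c', ∑ e', ∑ f',
            (Rinv (p, e) (a, c) * Rtilde (r, f) (e, q) *
              (R (a', c') (p, e') * R (e', q) (r, f'))) • (t m c' * D f' a') := by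
          refine Finset.sum_congr rfl fun p _ => Finset.sum_congr rfl fun q _ =>
            Finset.sum_congr rfl fun r _ => Finset.sum_congr rfl fun e _ => ?_
          simp only [Finset.smul_sum, smul_smul]
      _ = ∑ q, ∑ r, ∑ e, ∑ a', ∑ c', ∑ e', ∑ f', ∑ p,
            (Rinv (p, e) (a, c) * Rtilde (r, f) (e, q) *
              (R (a', c') (p, e') * R (e', q) (r, f'))) • (t m c' * D f' a') := brd_s8 _
      _ = ∑ r, ∑ e, ∑ a', ∑ c', ∑ e', ∑ f', ∑ p, ∑ q,
            (Rinv (p, e) (a, c) * Rtilde (r, f) (e, q) *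
              (R (a', c') (p, e') * R (e', q) (r, f'))) • (t m c' * D f' a') := brd_s8 _
      _ = ∑ e, ∑ a', ∑ c', ∑ e', ∑ f', ∑ p, ∑ q, ∑ r,
            (Rinv (p, e) (a, c) * Rtilde (r, f) (e, q) *
              (R (a', c') (p, e') * R (e', q) (r, f'))) • (t m c' * D f' a') := brd_s8 _
      _ = ∑ a', ∑ c', ∑ e', ∑ f', ∑ p, ∑ q, ∑ r, ∑ e,
            (Rinv (p, e) (a, c) * Rtilde (r, f) (e, q) *
              (R (a', c') (p, e') * R (e', q) (r, f'))) • (t m c' * D f' a') := brd_s8 _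
      _ = ∑ a', ∑ c', ∑ f', ∑ e', ∑ p, ∑ q, ∑ r, ∑ e,
            (Rinv (p, e) (a, c) * Rtilde (r, f) (e, q) *
              (R (a', c') (p, e') * R (e', q) (r, f'))) • (t m c' * D f' a') := by
          refine Finset.sum_congr rfl fun a' _ => Finset.sum_congr rfl fun c' _ =>
            Finset.sum_comm
      _ = ∑ a', ∑ c', ∑ f',
            ((∑ e', ∑ p, ∑ q, ∑ r, ∑ e,
              Rinv (p, e) (a, c) * Rtilde (r, f) (e, q) *
                (R (a', c') (p, e') * R (e', q) (r, f')))) • (t m c' * D f' a') := by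
          simp only [Finset.sum_smul]
      _ = ∑ a', ∑ c', ∑ f',
            (if (a' = a ∧ c' = c) ∧ f' = f then (1 : k) else 0) • (t m c' * D f' a') := by
          refine Finset.sum_congr rfl fun a' _ => Finset.sum_congr rfl fun c' _ =>
            Finset.sum_congr rfl fun f' _ => ?_
          rw [brd_scalarTinv R Rinv Rtilde hinv htilde a c f a' c' f']
      _ = t m c * D f a := by
          simp only [ite_smul, one_smul, zero_smul]
          have h1 : ∀ a' c' : Fin n,
              (∑ f', if (a' = a ∧ c' = c) ∧ f' = f then t m c' * D f' a' else 0)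
              = if a' = a ∧ c' = c then t m c' * D f a' else 0 := by
            intro a' c'
            by_cases h : a' = a ∧ c' = c <;> simp [h]
          rw [Finset.sum_congr rfl fun a' _ => Finset.sum_congr rfl fun c' _ => h1 a' c']
          have h2 : ∀ a' : Fin n,
              (∑ c', if a' = a ∧ c' = c then t m c' * D f a' else 0)
              = if a' = a then t m c * D f a' else 0 := by
            intro a'
            by_cases h : a' = a <;> simp [h]
          rw [Finset.sum_congr rfl fun a' _ => h2 a']
          simp
  calc t m c * D f a + (∑ p, ∑ e, (Rinv (p, e) (a, c) * (∑ s, Rtilde (s, f) (e, s))) • t m p)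
      = (∑ p, ∑ q, ∑ r, ∑ e, (Rinv (p, e) (a, c) * Rtilde (r, f) (e, q)) •
          (∑ a', ∑ c', ∑ e', ∑ f', (R (a', c') (p, e') * R (e', q) (r, f')) •
            (t m c' * D f' a')))
        + (∑ p, ∑ q, ∑ r, ∑ e, (Rinv (p, e) (a, c) * Rtilde (r, f) (e, q)) •
          (if q = r then t m p else 0)) := by rw [hT1, hTsub]
    _ = ∑ p, ∑ q, ∑ r, ∑ e, (Rinv (p, e) (a, c) * Rtilde (r, f) (e, q)) •
          (D q p * t m r) := by
        rw [← Finset.sum_add_distrib]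
        refine Finset.sum_congr rfl fun p _ => ?_
        rw [← Finset.sum_add_distrib]
        refine Finset.sum_congr rfl fun q _ => ?_
        rw [← Finset.sum_add_distrib]
        refine Finset.sum_congr rfl fun r _ => ?_
        rw [← Finset.sum_add_distrib]
        refine Finset.sum_congr rfl fun e _ => ?_
        rw [← smul_add, ← htx q p m r]

end BraidedHelpers

/-- **Proposition 3.4.** The left-invariant vector fields `D^{i₁}_{i₀} = Σ_a t^a_{i₀} d^{i₁}_a`
inside the braided Heisenberg–Weyl algebra close under the braided-Lie-algebra-type
relations with relation matrix `Ψ'`. -/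
theorem left_invariant_vector_fields_relations
    {k : Type*} [Field k] {B : Type*} [Ring B] [Algebra k B] {n : ℕ}
    (R Rinv Rtilde : Matrix (Fin n × Fin n) (Fin n × Fin n) k)
    (hQYBE : QYBE R)
    (hinv : R * Rinv = 1) (hinv' : Rinv * R = 1)
    (htilde : t2 R * t2 Rtilde = 1) (htilde' : t2 Rtilde * t2 R = 1)
    (t d : Fin n → Fin n → B)
    (ht : FRT R t)
    (hd : ∀ i j m p : Fin n,
      (∑ a, ∑ b, R (a, b) (m, p) • (d i a * d j b)) =
      (∑ a, ∑ b, R (i, j) (a, b) • (d b p * d a m)))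
    (hweyl : ∀ i₀ i₁ j₀ j₁ : Fin n,
      d i₁ i₀ * t j₀ j₁ -
        (∑ a, ∑ b, ∑ c, ∑ e,
          (R (a, j₀) (i₀, b) * R (c, i₁) (j₁, e)) • (t b c * d e a)) =
      if i₁ = j₁ ∧ j₀ = i₀ then 1 else 0)
    (D : Fin n → Fin n → B)
    (hD : ∀ u l, D u l = ∑ a, t a l * d u a) :
    ∀ I J : Fin n × Fin n,
      D I.2 I.1 * D J.2 J.1 -
        (∑ X : Fin n × Fin n, ∑ Y : Fin n × Fin n,
          Psi' R Rinv Rtilde I X J Y • (D Y.2 Y.1 * D X.2 X.1)) =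
      (if I.2 = J.1 then D J.2 I.1 else 0) -
        (∑ X : Fin n × Fin n, ∑ Y : Fin n × Fin n,
          Psi' R Rinv Rtilde I X J Y • (if Y.2 = X.1 then D X.2 Y.1 else 0)) := by
  intro I J
  obtain ⟨i₀, i₁⟩ := I
  obtain ⟨j₀, j₁⟩ := J
  have hdx := brd_Dexch R t d D hd hweyl hD
  have hDD := brd_DDexp R t d D hD hdx
  have htx := brd_Texch R t d D ht hweyl hD
  have htv := brd_Tinv R Rinv Rtilde t d D hinv htilde htx
  rw [sub_eq_sub_iff_sub_eq_sub]
  have hinner : ∀ c α β : Fin n,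
      (∑ w, t w i₀ * (D β c * d α w)) =
        (∑ p, ∑ q, ∑ r, ∑ e', (Rinv (p, e') (c, i₀) * Rtilde (r, β) (e', q)) •
          (D q p * D α r))
        - (∑ p, ∑ e', (Rinv (p, e') (c, i₀) * (∑ s, Rtilde (s, β) (e', s))) • D α p) := by
    intro c α β
    have hS1 : (∑ w, (∑ p, ∑ q, ∑ r, ∑ e', (Rinv (p, e') (c, i₀) * Rtilde (r, β) (e', q)) •
          (D q p * t w r)) * d α w)
        = ∑ p, ∑ q, ∑ r, ∑ e', (Rinv (p, e') (c, i₀) * Rtilde (r, β) (e', q)) •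
          (D q p * D α r) := by
      calc (∑ w, (∑ p, ∑ q, ∑ r, ∑ e', (Rinv (p, e') (c, i₀) * Rtilde (r, β) (e', q)) •
            (D q p * t w r)) * d α w)
          = ∑ w, ∑ p, ∑ q, ∑ r, ∑ e', (Rinv (p, e') (c, i₀) * Rtilde (r, β) (e', q)) •
            (D q p * (t w r * d α w)) := by
            exact Finset.sum_congr rfl fun w _ => by
              simp only [Finset.sum_mul, smul_mul_assoc, mul_assoc]
        _ = ∑ p, ∑ q, ∑ r, ∑ e', ∑ w, (Rinv (p, e') (c, i₀) * Rtilde (r, β) (e', q)) •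
            (D q p * (t w r * d α w)) := brd_s5 _
        _ = ∑ p, ∑ q, ∑ r, ∑ e', (Rinv (p, e') (c, i₀) * Rtilde (r, β) (e', q)) •
            (D q p * D α r) := by
            refine Finset.sum_congr rfl fun p _ => Finset.sum_congr rfl fun q _ =>
              Finset.sum_congr rfl fun r _ => Finset.sum_congr rfl fun e' _ => ?_
            rw [hD α r, Finset.mul_sum, Finset.smul_sum]
    have hS2 : (∑ w, (∑ p, ∑ e', (Rinv (p, e') (c, i₀) * (∑ s, Rtilde (s, β) (e', s))) •
          t w p) * d α w)
        = ∑ p, ∑ e', (Rinv (p, e') (c, i₀) * (∑ s, Rtilde (s, β) (e', s))) • D α p := by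
      calc (∑ w, (∑ p, ∑ e', (Rinv (p, e') (c, i₀) * (∑ s, Rtilde (s, β) (e', s))) •
            t w p) * d α w)
          = ∑ w, ∑ p, ∑ e', (Rinv (p, e') (c, i₀) * (∑ s, Rtilde (s, β) (e', s))) •
            (t w p * d α w) := by
            exact Finset.sum_congr rfl fun w _ => by
              simp only [Finset.sum_mul, smul_mul_assoc]
        _ = ∑ p, ∑ e', ∑ w, (Rinv (p, e') (c, i₀) * (∑ s, Rtilde (s, β) (e', s))) •
            (t w p * d α w) := brd_s3 _
        _ = ∑ p, ∑ e', (Rinv (p, e') (c, i₀) * (∑ s, Rtilde (s, β) (e', s))) • D α p := by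
            refine Finset.sum_congr rfl fun p _ => Finset.sum_congr rfl fun e' _ => ?_
            rw [hD α p, Finset.smul_sum]
    calc (∑ w, t w i₀ * (D β c * d α w))
        = ∑ w, (t w i₀ * D β c) * d α w := by
          exact Finset.sum_congr rfl fun w _ => (mul_assoc _ _ _).symm
      _ = ∑ w, ((∑ p, ∑ q, ∑ r, ∑ e', (Rinv (p, e') (c, i₀) * Rtilde (r, β) (e', q)) •
            (D q p * t w r)) * d α w
            - (∑ p, ∑ e', (Rinv (p, e') (c, i₀) * (∑ s, Rtilde (s, β) (e', s))) •
              t w p) * d α w) := by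
          exact Finset.sum_congr rfl fun w _ => by rw [htv w i₀ β c, sub_mul]
      _ = (∑ w, (∑ p, ∑ q, ∑ r, ∑ e', (Rinv (p, e') (c, i₀) * Rtilde (r, β) (e', q)) •
            (D q p * t w r)) * d α w)
          - ∑ w, (∑ p, ∑ e', (Rinv (p, e') (c, i₀) * (∑ s, Rtilde (s, β) (e', s))) •
            t w p) * d α w := Finset.sum_sub_distrib _ _
      _ = (∑ p, ∑ q, ∑ r, ∑ e', (Rinv (p, e') (c, i₀) * Rtilde (r, β) (e', q)) •
            (D q p * D α r))
          - (∑ p, ∑ e', (Rinv (p, e') (c, i₀) * (∑ s, Rtilde (s, β) (e', s))) • D α p) := by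
          rw [hS1, hS2]
  have hTA : (∑ c, ∑ e, ∑ α, ∑ β, ∑ p, ∑ q, ∑ r, ∑ e',
        ((R (c, i₁) (j₀, e) * R (e, j₁) (α, β)) *
          (Rinv (p, e') (c, i₀) * Rtilde (r, β) (e', q))) • (D q p * D α r))
      = ∑ X : Fin n × Fin n, ∑ Y : Fin n × Fin n,
          Psi' R Rinv Rtilde (i₀, i₁) X (j₀, j₁) Y • (D Y.2 Y.1 * D X.2 X.1) := by
    rw [Fintype.sum_prod_type]
    simp only [Fintype.sum_prod_type, Psi', Finset.sum_smul]
    -- target now: ∑ x₀, ∑ x₁, ∑ y₀, ∑ y₁, ∑ a, ∑ b, ∑ c, ∑ e, (...)•(...)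
    calc (∑ c, ∑ e, ∑ α, ∑ β, ∑ p, ∑ q, ∑ r, ∑ e',
          ((R (c, i₁) (j₀, e) * R (e, j₁) (α, β)) *
            (Rinv (p, e') (c, i₀) * Rtilde (r, β) (e', q))) • (D q p * D α r))
        = ∑ e, ∑ α, ∑ β, ∑ p, ∑ q, ∑ r, ∑ e', ∑ c,
            ((R (c, i₁) (j₀, e) * R (e, j₁) (α, β)) *
              (Rinv (p, e') (c, i₀) * Rtilde (r, β) (e', q))) • (D q p * D α r) := brd_s8 _
      _ = ∑ α, ∑ β, ∑ p, ∑ q, ∑ r, ∑ e', ∑ c, ∑ e,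
            ((R (c, i₁) (j₀, e) * R (e, j₁) (α, β)) *
              (Rinv (p, e') (c, i₀) * Rtilde (r, β) (e', q))) • (D q p * D α r) := brd_s8 _
      _ = ∑ β, ∑ p, ∑ q, ∑ r, ∑ e', ∑ c, ∑ e, ∑ α,
            ((R (c, i₁) (j₀, e) * R (e, j₁) (α, β)) *
              (Rinv (p, e') (c, i₀) * Rtilde (r, β) (e', q))) • (D q p * D α r) := brd_s8 _
      _ = ∑ p, ∑ q, ∑ r, ∑ e', ∑ c, ∑ e, ∑ α, ∑ β,
            ((R (c, i₁) (j₀, e) * R (e, j₁) (α, β)) *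
              (Rinv (p, e') (c, i₀) * Rtilde (r, β) (e', q))) • (D q p * D α r) := brd_s8 _
      _ = ∑ q, ∑ r, ∑ e', ∑ c, ∑ e, ∑ α, ∑ β, ∑ p,
            ((R (c, i₁) (j₀, e) * R (e, j₁) (α, β)) *
              (Rinv (p, e') (c, i₀) * Rtilde (r, β) (e', q))) • (D q p * D α r) := brd_s8 _
      _ = ∑ r, ∑ e', ∑ c, ∑ e, ∑ α, ∑ β, ∑ p, ∑ q,
            ((R (c, i₁) (j₀, e) * R (e, j₁) (α, β)) *
              (Rinv (p, e') (c, i₀) * Rtilde (r, β) (e', q))) • (D q p * D α r) := brd_s8 _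
      _ = ∑ r, ∑ α, ∑ β, ∑ p, ∑ q, ∑ e', ∑ c, ∑ e,
            ((R (c, i₁) (j₀, e) * R (e, j₁) (α, β)) *
              (Rinv (p, e') (c, i₀) * Rtilde (r, β) (e', q))) • (D q p * D α r) := by
          refine Finset.sum_congr rfl fun r _ => ?_
          refine Eq.trans (brd_s7 _) (Eq.trans (brd_s7 _) (Eq.trans (brd_s7 _) ?_))
          -- now (α, β, p, q, e', c, e); need (α, β, p, q, e', c, e) -- check below
          rfl
      _ = ∑ r, ∑ α, ∑ p, ∑ q, ∑ e, ∑ β, ∑ e', ∑ c,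
            ((R (c, i₁) (j₀, e) * R (e, j₁) (α, β)) *
              (Rinv (p, e') (c, i₀) * Rtilde (r, β) (e', q))) • (D q p * D α r) := by
          refine Finset.sum_congr rfl fun r _ => Finset.sum_congr rfl fun α _ => ?_
          refine Eq.trans (brd_s6 _) ?_
          refine Finset.sum_congr rfl fun p _ => Finset.sum_congr rfl fun q _ => ?_
          exact Eq.trans (brd_s4 _) (brd_s4 _)
      _ = ∑ x₀, ∑ x₁, ∑ y₀, ∑ y₁, ∑ a, ∑ b, ∑ c, ∑ e,
            (Rinv (y₀, c) (e, i₀) * R (e, i₁) (j₀, a) * R (a, j₁) (x₁, b) *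
              Rtilde (x₀, b) (c, y₁)) • (D y₁ y₀ * D x₁ x₀) := by
          refine Finset.sum_congr rfl fun x₀ _ => Finset.sum_congr rfl fun x₁ _ =>
            Finset.sum_congr rfl fun y₀ _ => Finset.sum_congr rfl fun y₁ _ =>
            Finset.sum_congr rfl fun a _ => Finset.sum_congr rfl fun b _ =>
            Finset.sum_congr rfl fun c _ => Finset.sum_congr rfl fun e _ => ?_
          congr 1
          ring
  have hTB : (∑ c, ∑ e, ∑ α, ∑ β, ∑ p, ∑ e',
        ((R (c, i₁) (j₀, e) * R (e, j₁) (α, β)) *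
          (Rinv (p, e') (c, i₀) * (∑ s, Rtilde (s, β) (e', s)))) • D α p)
      = ∑ X : Fin n × Fin n, ∑ Y : Fin n × Fin n,
          Psi' R Rinv Rtilde (i₀, i₁) X (j₀, j₁) Y •
            (if Y.2 = X.1 then D X.2 Y.1 else 0) := by
    have hRHS : (∑ X : Fin n × Fin n, ∑ Y : Fin n × Fin n,
          Psi' R Rinv Rtilde (i₀, i₁) X (j₀, j₁) Y •
            (if Y.2 = X.1 then D X.2 Y.1 else 0))
        = ∑ x₀, ∑ x₁, ∑ y₀, ∑ a, ∑ b, ∑ c, ∑ e,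
            (Rinv (y₀, c) (e, i₀) * R (e, i₁) (j₀, a) * R (a, j₁) (x₁, b) *
              Rtilde (x₀, b) (c, x₀)) • D x₁ y₀ := by
      rw [Fintype.sum_prod_type]
      refine Finset.sum_congr rfl fun x₀ _ => Finset.sum_congr rfl fun x₁ _ => ?_
      rw [Fintype.sum_prod_type]
      refine Finset.sum_congr rfl fun y₀ _ => ?_
      calc (∑ y₁, Psi' R Rinv Rtilde (i₀, i₁) (x₀, x₁) (j₀, j₁) (y₀, y₁) •
              (if y₁ = x₀ then D x₁ y₀ else 0))
          = ∑ y₁, (if y₁ = x₀ then Psi' R Rinv Rtilde (i₀, i₁) (x₀, x₁) (j₀, j₁) (y₀, y₁) •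
              D x₁ y₀ else 0) := by
            refine Finset.sum_congr rfl fun y₁ _ => ?_
            simp only [smul_ite, smul_zero]
        _ = Psi' R Rinv Rtilde (i₀, i₁) (x₀, x₁) (j₀, j₁) (y₀, x₀) • D x₁ y₀ := by
            rw [Finset.sum_ite_eq' Finset.univ x₀
              (fun y₁ => Psi' R Rinv Rtilde (i₀, i₁) (x₀, x₁) (j₀, j₁) (y₀, y₁) • D x₁ y₀)]
            simp
        _ = ∑ a, ∑ b, ∑ c, ∑ e,
              (Rinv (y₀, c) (e, i₀) * R (e, i₁) (j₀, a) * R (a, j₁) (x₁, b) *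
                Rtilde (x₀, b) (c, x₀)) • D x₁ y₀ := by
            simp only [Psi', Finset.sum_smul]
    rw [hRHS]
    calc (∑ c, ∑ e, ∑ α, ∑ β, ∑ p, ∑ e',
          ((R (c, i₁) (j₀, e) * R (e, j₁) (α, β)) *
            (Rinv (p, e') (c, i₀) * (∑ s, Rtilde (s, β) (e', s)))) • D α p)
        = ∑ c, ∑ e, ∑ α, ∑ β, ∑ p, ∑ e', ∑ s,
            ((R (c, i₁) (j₀, e) * R (e, j₁) (α, β)) *
              (Rinv (p, e') (c, i₀) * Rtilde (s, β) (e', s))) • D α p := by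
          refine Finset.sum_congr rfl fun c _ => Finset.sum_congr rfl fun e _ =>
            Finset.sum_congr rfl fun α _ => Finset.sum_congr rfl fun β _ =>
            Finset.sum_congr rfl fun p _ => Finset.sum_congr rfl fun e' _ => ?_
          rw [Finset.mul_sum, Finset.mul_sum, Finset.sum_smul]
      _ = ∑ e, ∑ α, ∑ β, ∑ p, ∑ e', ∑ s, ∑ c,
            ((R (c, i₁) (j₀, e) * R (e, j₁) (α, β)) *
              (Rinv (p, e') (c, i₀) * Rtilde (s, β) (e', s))) • D α p := brd_s7 _
      _ = ∑ α, ∑ β, ∑ p, ∑ e', ∑ s, ∑ c, ∑ e,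
            ((R (c, i₁) (j₀, e) * R (e, j₁) (α, β)) *
              (Rinv (p, e') (c, i₀) * Rtilde (s, β) (e', s))) • D α p := brd_s7 _
      _ = ∑ β, ∑ p, ∑ e', ∑ s, ∑ c, ∑ e, ∑ α,
            ((R (c, i₁) (j₀, e) * R (e, j₁) (α, β)) *
              (Rinv (p, e') (c, i₀) * Rtilde (s, β) (e', s))) • D α p := brd_s7 _
      _ = ∑ p, ∑ e', ∑ s, ∑ c, ∑ e, ∑ α, ∑ β,
            ((R (c, i₁) (j₀, e) * R (e, j₁) (α, β)) *
              (Rinv (p, e') (c, i₀) * Rtilde (s, β) (e', s))) • D α p := brd_s7 _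
      _ = ∑ e', ∑ s, ∑ c, ∑ e, ∑ α, ∑ β, ∑ p,
            ((R (c, i₁) (j₀, e) * R (e, j₁) (α, β)) *
              (Rinv (p, e') (c, i₀) * Rtilde (s, β) (e', s))) • D α p := brd_s7 _
      _ = ∑ s, ∑ c, ∑ e, ∑ α, ∑ β, ∑ p, ∑ e',
            ((R (c, i₁) (j₀, e) * R (e, j₁) (α, β)) *
              (Rinv (p, e') (c, i₀) * Rtilde (s, β) (e', s))) • D α p := brd_s7 _
      _ = ∑ s, ∑ α, ∑ β, ∑ p, ∑ e', ∑ c, ∑ e,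
            ((R (c, i₁) (j₀, e) * R (e, j₁) (α, β)) *
              (Rinv (p, e') (c, i₀) * Rtilde (s, β) (e', s))) • D α p := by
          refine Finset.sum_congr rfl fun s _ => ?_
          exact Eq.trans (brd_s6 _) (brd_s6 _)
      _ = ∑ s, ∑ α, ∑ p, ∑ e, ∑ β, ∑ e', ∑ c,
            ((R (c, i₁) (j₀, e) * R (e, j₁) (α, β)) *
              (Rinv (p, e') (c, i₀) * Rtilde (s, β) (e', s))) • D α p := by
          refine Finset.sum_congr rfl fun s _ => Finset.sum_congr rfl fun α _ => ?_
          refine Eq.trans (brd_s5 _) ?_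
          refine Finset.sum_congr rfl fun p _ => ?_
          exact Eq.trans (brd_s4 _) (brd_s4 _)
      _ = ∑ x₀, ∑ x₁, ∑ y₀, ∑ a, ∑ b, ∑ c, ∑ e,
            (Rinv (y₀, c) (e, i₀) * R (e, i₁) (j₀, a) * R (a, j₁) (x₁, b) *
              Rtilde (x₀, b) (c, x₀)) • D x₁ y₀ := by
          refine Finset.sum_congr rfl fun x₀ _ => Finset.sum_congr rfl fun x₁ _ =>
            Finset.sum_congr rfl fun y₀ _ => Finset.sum_congr rfl fun a _ =>
            Finset.sum_congr rfl fun b _ => Finset.sum_congr rfl fun c _ =>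
            Finset.sum_congr rfl fun e _ => ?_
          congr 1
          ring
  calc D (i₀, i₁).2 (i₀, i₁).1 * D (j₀, j₁).2 (j₀, j₁).1
        - (if (i₀, i₁).2 = (j₀, j₁).1 then D (j₀, j₁).2 (i₀, i₁).1 else 0)
      = D i₁ i₀ * D j₁ j₀ - (if i₁ = j₀ then D j₁ i₀ else 0) := rfl
    _ = ∑ c, ∑ e, ∑ α, ∑ β, (R (c, i₁) (j₀, e) * R (e, j₁) (α, β)) •
          (∑ w, t w i₀ * (D β c * d α w)) := by
        rw [hDD i₁ i₀ j₁ j₀]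
        exact add_sub_cancel_right _ _
    _ = (∑ c, ∑ e, ∑ α, ∑ β, ∑ p, ∑ q, ∑ r, ∑ e',
          ((R (c, i₁) (j₀, e) * R (e, j₁) (α, β)) *
            (Rinv (p, e') (c, i₀) * Rtilde (r, β) (e', q))) • (D q p * D α r))
        - (∑ c, ∑ e, ∑ α, ∑ β, ∑ p, ∑ e',
          ((R (c, i₁) (j₀, e) * R (e, j₁) (α, β)) *
            (Rinv (p, e') (c, i₀) * (∑ s, Rtilde (s, β) (e', s)))) • D α p) := by
        simp only [fun c α β => hinner c α β]
        simp only [smul_sub, Finset.sum_sub_distrib, Finset.smul_sum, smul_smul]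
    _ = (∑ X : Fin n × Fin n, ∑ Y : Fin n × Fin n,
          Psi' R Rinv Rtilde (i₀, i₁) X (j₀, j₁) Y • (D Y.2 Y.1 * D X.2 X.1))
        - ∑ X : Fin n × Fin n, ∑ Y : Fin n × Fin n,
          Psi' R Rinv Rtilde (i₀, i₁) X (j₀, j₁) Y •
            (if Y.2 = X.1 then D X.2 Y.1 else 0) := by
        rw [hTA, hTB]
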